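/- Let G be a group and x an automorphism of G such that for every g in G there exists n with [g, x, x, ..., x] (n times) = 1 (commutators taken in the holomorph). If G is a torsion-free abelian group and x has finite order, then x is the identity automorphism. -/

import Mathlib

/-- The Mathlib (Dec 2024) definition, removed since: a monoid is torsion-free if no
non-identity element has finite order. -/
def Monoid.IsTorsionFree (G : Type*) [Monoid G] : Prop :=
  ∀ g : G, g ≠ 1 → ¬IsOfFinOrder g

/-- A nil-automorphism of finite order of a torsion-free abelian group is the identity. -/
theorem stmt_0 {G : Type*} [CommGroup G] (hTF : Monoid.IsTorsionFree G)
    (x : MulAut G)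
    (hnil : ∀ g : G, ∃ n : ℕ, (fun a => a⁻¹ * x a)^[n] g = 1)
    (k : ℕ) (hk : 0 < k) (hx : x ^ k = 1) :
    x = 1 := by
  set D : G → G := fun a => a⁻¹ * x a with hD
  -- key lemma: D (D g) = 1 → D g = 1
  have key : ∀ g : G, D (D g) = 1 → D g = 1 := by
    intro g h2
    set c := D g with hc
    have hxc : x c = c := by
      have : c⁻¹ * x c = 1 := h2
      calc x c = c * (c⁻¹ * x c) := by group
        _ = c := by rw [this, mul_one]
    have hpow : ∀ j : ℕ, (x ^ j) g = g * c ^ j := by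
      intro j
      induction j with
      | zero => simp
      | succ j ih =>
        have : (x ^ (j + 1)) g = x ((x ^ j) g) := by
          rw [pow_succ']; rfl
        rw [this, ih, map_mul, map_pow, hxc, pow_succ]
        have hxg : x g = g * c := by
          simp only [hc, hD]; group
        rw [hxg, mul_assoc, mul_comm c (c ^ j)]
    have hck : c ^ k = 1 := by
      have := hpow k
      rw [hx] at this
      simp only [MulAut.one_apply] at this
      have : g * c ^ k = g := this.symm
      exact (mul_eq_left).mp this
    by_contra hne
    exact hTF c hne (isOfFinOrder_iff_pow_eq_one.mpr ⟨k, hk, hck⟩)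
  -- main: D^[n] g = 1 → D g = 1
  have main : ∀ n : ℕ, ∀ g : G, D^[n] g = 1 → D g = 1 := by
    intro n
    induction n with
    | zero => intro g hg; simp at hg; simp [hD, hg]
    | succ n ih =>
      intro g hg
      rw [Function.iterate_succ_apply] at hg
      exact key g (ih (D g) hg)
  ext g
  obtain ⟨n, hn⟩ := hnil g
  have := main n g hn
  have : x g = g := by
    have h : g⁻¹ * x g = 1 := this
    calc x g = g * (g⁻¹ * x g) := by group
      _ = g := by rw [h, mul_one]
  simpa using this
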